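/- Let Q be a quantale with exactly seven pairwise distinct elements ⊥, α, β, γ, α ⊔ γ, β ⊔ γ, ⊤ (every element of Q is one of these), where α, β, γ are pairwise incomparable atoms, α ⊔ β = ⊤, α ⊔ γ ≠ ⊤, β ⊔ γ ≠ ⊤, and (α ⊔ γ) ⊓ (β ⊔ γ) = γ (the lattice L7). Assume (a) γ * a ⊔ a * γ ≤ a for all a ∈ Q, and (b) for all a ∈ Q and all b ∈ Q with b ≰ γ one has ⊤ * a ≤ (b * a) ⊔ a and a * ⊤ ≤ (a * b) ⊔ a. Then ⊤ * γ = ⊥ and γ * ⊤ = ⊥. -/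
import Mathlib


/-- Let `Q` be a quantale on the lattice `L7` (exactly the seven
pairwise distinct elements `⊥, α, β, γ, α ⊔ γ, β ⊔ γ, ⊤`, with pairwise
incomparable atoms `α, β, γ`, `α ⊔ β = ⊤`, `α ⊔ γ ≠ ⊤`, `β ⊔ γ ≠ ⊤`, and
`(α ⊔ γ) ⊓ (β ⊔ γ) = γ`) satisfying conditions (a) and (b). Then
`⊤ * γ = ⊥` and `γ * ⊤ = ⊥`. -/
theorem stmt_19 {Q : Type*} [CompleteLattice Q] (mul : Q → Q → Q)
    (hassoc : ∀ a b c : Q, mul (mul a b) c = mul a (mul b c))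
    (hsSup_left : ∀ (A : Set Q) (b : Q), mul (sSup A) b = ⨆ a ∈ A, mul a b)
    (hsSup_right : ∀ (A : Set Q) (b : Q), mul b (sSup A) = ⨆ a ∈ A, mul b a)
    (α β γ : Q)
    (hdistinct : ([⊥, α, β, γ, α ⊔ γ, β ⊔ γ, ⊤] : List Q).Pairwise (· ≠ ·))
    (hcover : ∀ q : Q, q = ⊥ ∨ q = α ∨ q = β ∨ q = γ ∨ q = α ⊔ γ ∨
      q = β ⊔ γ ∨ q = ⊤)
    (hα : IsAtom α) (hβ : IsAtom β) (hγ : IsAtom γ)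
    (hαβ : ¬ α ≤ β ∧ ¬ β ≤ α) (hαγ : ¬ α ≤ γ ∧ ¬ γ ≤ α) (hβγ : ¬ β ≤ γ ∧ ¬ γ ≤ β)
    (hjαβ : α ⊔ β = ⊤) (hne1 : α ⊔ γ ≠ ⊤) (hne2 : β ⊔ γ ≠ ⊤)
    (hmeet : (α ⊔ γ) ⊓ (β ⊔ γ) = γ)
    (ha : ∀ a : Q, mul γ a ⊔ mul a γ ≤ a)
    (hb : ∀ a b : Q, ¬ b ≤ γ →
      mul ⊤ a ≤ mul b a ⊔ a ∧ mul a ⊤ ≤ mul a b ⊔ a) :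
    mul ⊤ γ = ⊥ ∧ mul γ ⊤ = ⊥ := by
  -- sup distributivity for binary sups
  have hmul_sup_left : ∀ a b c : Q, mul (a ⊔ b) c = mul a c ⊔ mul b c := by
    intro a b c
    have := hsSup_left {a, b} c
    rwa [sSup_pair, iSup_pair] at this
  have hmul_sup_right : ∀ a b c : Q, mul c (a ⊔ b) = mul c a ⊔ mul c b := by
    intro a b c
    have := hsSup_right {a, b} c
    rwa [sSup_pair, iSup_pair] at this
  -- atoms meet trivially
  have hinf : ∀ x : Q, IsAtom x → ¬ x ≤ γ → x ⊓ γ = ⊥ := by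
    intro x hx hxγ
    rcases (inf_le_left : x ⊓ γ ≤ x).lt_or_eq with h | h
    · exact hx.2 _ h
    · exact absurd (by rw [← h]; exact inf_le_right) hxγ
  have hαγbot : α ⊓ γ = ⊥ := hinf α hα hαγ.1
  have hβγbot : β ⊓ γ = ⊥ := hinf β hβ hβγ.1
  -- from (a)
  have hαγle : mul α γ ≤ α := le_sup_right.trans (ha α)
  have hβγle : mul β γ ≤ β := le_sup_right.trans (ha β)
  have hγαle : mul γ α ≤ α := le_sup_left.trans (ha α)
  have hγβle : mul γ β ≤ β := le_sup_left.trans (ha β)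
  -- ⊤ * γ ≤ γ
  have hTγ : mul ⊤ γ ≤ γ := by
    have h1 : mul ⊤ γ ≤ α ⊔ γ :=
      (hb γ α hαγ.1).1.trans (sup_le_sup_right hαγle γ)
    have h2 : mul ⊤ γ ≤ β ⊔ γ :=
      (hb γ β hβγ.1).1.trans (sup_le_sup_right hβγle γ)
    exact (le_inf h1 h2).trans hmeet.le
  have hγT : mul γ ⊤ ≤ γ := by
    have h1 : mul γ ⊤ ≤ α ⊔ γ :=
      (hb γ α hαγ.1).2.trans (sup_le_sup_right hγαle γ)
    have h2 : mul γ ⊤ ≤ β ⊔ γ :=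
      (hb γ β hβγ.1).2.trans (sup_le_sup_right hγβle γ)
    exact (le_inf h1 h2).trans hmeet.le
  -- split ⊤ = α ⊔ β
  have hTγeq : mul ⊤ γ = mul α γ ⊔ mul β γ := by
    rw [← hjαβ, hmul_sup_left]
  have hγTeq : mul γ ⊤ = mul γ α ⊔ mul γ β := by
    rw [← hjαβ, hmul_sup_right]
  constructor
  · rw [hTγeq]
    have h1 : mul α γ = ⊥ := le_bot_iff.mp <| by
      rw [← hαγbot]
      exact le_inf hαγle (le_trans (hTγeq ▸ le_sup_left) hTγ)
    have h2 : mul β γ = ⊥ := le_bot_iff.mp <| by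
      rw [← hβγbot]
      exact le_inf hβγle (le_trans (hTγeq ▸ le_sup_right) hTγ)
    rw [h1, h2, sup_idem]
  · rw [hγTeq]
    have h1 : mul γ α = ⊥ := le_bot_iff.mp <| by
      rw [← hαγbot]
      exact le_inf hγαle (le_trans (hγTeq ▸ le_sup_left) hγT)
    have h2 : mul γ β = ⊥ := le_bot_iff.mp <| by
      rw [← hβγbot]
      exact le_inf hγβle (le_trans (hγTeq ▸ le_sup_right) hγT)
    rw [h1, h2, sup_idem]
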